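/- arXiv:1212.1274 — 3 statements merged into one kernel-verified Lean document; each statement's English description precedes it below -/
import Mathlib

section
/- Let A and A' be two real symmetric n×n matrices. Then the Hausdorff distance between their spectra, computed with respect to the standard distance on ℝ, is at most the operator norm of A − A' (induced by the supremum norm on ℝⁿ): d(Spec(A), Spec(A')) ≤ |A − A'|. -/
/-- The operator norm of a real `n × n` matrix acting on `ℝⁿ` equipped with the
supremum norm. -/
noncomputable def matOpNorm {n : ℕ} (M : Matrix (Fin n) (Fin n) ℝ) : ℝ :=
  ‖LinearMap.toContinuousLinearMap (Matrix.toLin' M)‖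

noncomputable def endCLM (n : ℕ) :
    ((Fin n → ℝ) →ₗ[ℝ] (Fin n → ℝ)) ≃ₐ[ℝ] ((Fin n → ℝ) →L[ℝ] (Fin n → ℝ)) :=
  AlgEquiv.ofLinearEquiv (LinearMap.toContinuousLinearMap) rfl (fun _ _ => rfl)

lemma spec_eq (n : ℕ) (M : Matrix (Fin n) (Fin n) ℝ) :
    spectrum ℝ M = spectrum ℝ (LinearMap.toContinuousLinearMap (Matrix.toLin' M)) := by
  rw [show LinearMap.toContinuousLinearMap (Matrix.toLin' M)
      = (Matrix.toLinAlgEquiv'.trans (endCLM n)) M from rfl, AlgEquiv.spectrum_eq]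

lemma matOpNorm_nonneg {n : ℕ} (M : Matrix (Fin n) (Fin n) ℝ) : 0 ≤ matOpNorm M :=
  norm_nonneg _

lemma matOpNorm_sub_comm {n : ℕ} (A B : Matrix (Fin n) (Fin n) ℝ) :
    matOpNorm (A - B) = matOpNorm (B - A) := by
  unfold matOpNorm
  rw [show A - B = -(B - A) from (neg_sub B A).symm, map_neg, map_neg, norm_neg]

lemma abs_le_opNorm {n : ℕ} [Nonempty (Fin n)] {M : Matrix (Fin n) (Fin n) ℝ} {μ : ℝ}
    (hμ : μ ∈ spectrum ℝ M) : |μ| ≤ matOpNorm M := by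
  rw [spec_eq] at hμ
  simpa [matOpNorm] using spectrum.norm_le_norm_of_mem hμ

lemma inner_eigen {n : ℕ} {M : Matrix (Fin n) (Fin n) ℝ} (hM : M.IsHermitian)
    (μ : ℝ) (v : EuclideanSpace ℝ (Fin n)) (j : Fin n) :
    inner (𝕜 := ℝ) (hM.eigenvectorBasis j) (Matrix.toEuclideanLin M v - μ • v)
      = (hM.eigenvalues j - μ) * inner (𝕜 := ℝ) (hM.eigenvectorBasis j) v := by
  have hsym := (Matrix.isHermitian_iff_isSymmetric.1 hM)
  have h1 : Matrix.toEuclideanLin M (hM.eigenvectorBasis j)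
      = hM.eigenvalues j • (hM.eigenvectorBasis j) := by
    apply (WithLp.equiv 2 (Fin n → ℝ)).injective
    simpa [Matrix.toEuclideanLin_apply] using hM.mulVec_eigenvectorBasis j
  rw [inner_sub_right, inner_smul_right, ← hsym (hM.eigenvectorBasis j) v, h1,
    inner_smul_left]
  simp [sub_mul]

lemma parseval {n : ℕ} (b : OrthonormalBasis (Fin n) ℝ (EuclideanSpace ℝ (Fin n)))
    (w : EuclideanSpace ℝ (Fin n)) :
    ‖w‖ ^ 2 = ∑ j, (inner (𝕜 := ℝ) (b j) w) ^ 2 := by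
  rw [← b.repr.norm_map w, EuclideanSpace.norm_eq, Real.sq_sqrt (by positivity)]
  simp [b.repr_apply_apply, sq_abs]

lemma norm_sq_expand {n : ℕ} {M : Matrix (Fin n) (Fin n) ℝ} (hM : M.IsHermitian)
    (μ : ℝ) (v : EuclideanSpace ℝ (Fin n)) :
    ‖Matrix.toEuclideanLin M v - μ • v‖ ^ 2
      = ∑ j, (hM.eigenvalues j - μ) ^ 2 * (inner (𝕜 := ℝ) (hM.eigenvectorBasis j) v) ^ 2 := by
  rw [parseval hM.eigenvectorBasis]
  simp [inner_eigen hM μ v, mul_pow]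

lemma key {n : ℕ} [Nonempty (Fin n)] {A A' : Matrix (Fin n) (Fin n) ℝ}
    (hA : A.IsHermitian) (hA' : A'.IsHermitian) {μ : ℝ} (hμ : μ ∈ spectrum ℝ A) :
    ∃ ν ∈ spectrum ℝ A', dist μ ν ≤ matOpNorm (A - A') := by
  set r := matOpNorm (A - A') with hr
  -- eigenvector for μ
  rw [hA.spectrum_real_eq_range_eigenvalues] at hμ
  obtain ⟨i, hi⟩ := hμ
  set v : EuclideanSpace ℝ (Fin n) := hA.eigenvectorBasis i with hv
  have hv1 : ‖v‖ = 1 := hA.eigenvectorBasis.orthonormal.1 i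
  have hAv : Matrix.toEuclideanLin A v = μ • v := by
    apply (WithLp.equiv 2 (Fin n → ℝ)).injective
    rw [← hi]
    simpa [Matrix.toEuclideanLin_apply] using hA.mulVec_eigenvectorBasis i
  -- the difference matrix
  have hB : (A' - A).IsHermitian := hA'.sub hA
  have hw : Matrix.toEuclideanLin A' v - μ • v = Matrix.toEuclideanLin (A' - A) v - (0:ℝ) • v := by
    simp [map_sub, hAv, sub_smul]
  -- upper bound on ‖w‖²
  have hub : ‖Matrix.toEuclideanLin A' v - μ • v‖ ^ 2 ≤ r ^ 2 := by
    rw [hw, norm_sq_expand hB]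
    have hbd : ∀ k, (hB.eigenvalues k - 0) ^ 2 ≤ r ^ 2 := by
      intro k
      have h1 : |hB.eigenvalues k| ≤ matOpNorm (A' - A) :=
        abs_le_opNorm (hB.eigenvalues_mem_spectrum_real k)
      rw [matOpNorm_sub_comm] at h1
      have := abs_nonneg (hB.eigenvalues k)
      nlinarith [sq_abs (hB.eigenvalues k)]
    calc ∑ k, (hB.eigenvalues k - 0) ^ 2 * (inner (𝕜 := ℝ) (hB.eigenvectorBasis k) v) ^ 2
        ≤ ∑ k, r ^ 2 * (inner (𝕜 := ℝ) (hB.eigenvectorBasis k) v) ^ 2 := by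
          apply Finset.sum_le_sum
          intro k _
          exact mul_le_mul_of_nonneg_right (hbd k) (sq_nonneg _)
      _ = r ^ 2 * ‖v‖ ^ 2 := by rw [← Finset.mul_sum, ← parseval]
      _ = r ^ 2 := by rw [hv1]; ring
  -- pick the closest eigenvalue of A'
  obtain ⟨j₀, -, hj₀⟩ := Finset.exists_min_image Finset.univ
    (fun j => |hA'.eigenvalues j - μ|) ⟨Classical.arbitrary _, Finset.mem_univ _⟩
  refine ⟨hA'.eigenvalues j₀, hA'.eigenvalues_mem_spectrum_real j₀, ?_⟩
  -- lower bound
  have hlb : |hA'.eigenvalues j₀ - μ| ^ 2 ≤ ‖Matrix.toEuclideanLin A' v - μ • v‖ ^ 2 := by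
    rw [norm_sq_expand hA']
    calc |hA'.eigenvalues j₀ - μ| ^ 2
        = |hA'.eigenvalues j₀ - μ| ^ 2 * ‖v‖ ^ 2 := by rw [hv1]; ring
      _ = ∑ j, |hA'.eigenvalues j₀ - μ| ^ 2 * (inner (𝕜 := ℝ) (hA'.eigenvectorBasis j) v) ^ 2 := by
          rw [← Finset.mul_sum, ← parseval]
      _ ≤ ∑ j, (hA'.eigenvalues j - μ) ^ 2 * (inner (𝕜 := ℝ) (hA'.eigenvectorBasis j) v) ^ 2 := by
          apply Finset.sum_le_sum
          intro j _
          apply mul_le_mul_of_nonneg_right _ (sq_nonneg _)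
          have := hj₀ j (Finset.mem_univ j)
          nlinarith [sq_abs (hA'.eigenvalues j - μ), sq_abs (hA'.eigenvalues j₀ - μ),
            abs_nonneg (hA'.eigenvalues j - μ), abs_nonneg (hA'.eigenvalues j₀ - μ)]
  have h2 : |hA'.eigenvalues j₀ - μ| ^ 2 ≤ r ^ 2 := hlb.trans hub
  have hrn : 0 ≤ r := matOpNorm_nonneg _
  rw [Real.dist_eq]
  have : |μ - hA'.eigenvalues j₀| = |hA'.eigenvalues j₀ - μ| := abs_sub_comm _ _
  rw [this]
  nlinarith [abs_nonneg (hA'.eigenvalues j₀ - μ)]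

lemma isHermitianReal {n : ℕ} {A : Matrix (Fin n) (Fin n) ℝ} (hA : A.IsSymm) :
    A.IsHermitian := by
  rwa [Matrix.IsHermitian, Matrix.conjTranspose_eq_transpose_of_trivial]

lemma spectrum_empty_zero (A : Matrix (Fin 0) (Fin 0) ℝ) : spectrum ℝ A = ∅ := by
  ext x
  simp [spectrum.mem_iff, isUnit_of_subsingleton]

/-- For real symmetric matrices `A, A'`, the Hausdorff distance between
their spectra is at most the operator norm of `A − A'`. -/
theorem stmt4 (n : ℕ) (A A' : Matrix (Fin n) (Fin n) ℝ)
    (hA : A.IsSymm) (hA' : A'.IsSymm) :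
    Metric.hausdorffDist (spectrum ℝ A) (spectrum ℝ A') ≤ matOpNorm (A - A') := by
  rcases Nat.eq_zero_or_pos n with hn | hn
  · subst hn
    rw [spectrum_empty_zero, Metric.hausdorffDist_empty']
    exact matOpNorm_nonneg _
  · haveI : Nonempty (Fin n) := Fin.pos_iff_nonempty.mp hn
    apply Metric.hausdorffDist_le_of_mem_dist (matOpNorm_nonneg _)
    · intro μ hμ
      exact key (isHermitianReal hA) (isHermitianReal hA') hμ
    · intro ν hν
      obtain ⟨μ, hμ, hd⟩ := key (isHermitianReal hA') (isHermitianReal hA) hν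
      exact ⟨μ, hμ, by rwa [matOpNorm_sub_comm] at hd⟩
end

section
/- Let f ∈ C¹(𝕋ⁿ × B) with B ⊂ ℝⁿ, let ω ∈ ℝⁿ with minimal rational subspace F, and let Π_F denote the orthogonal projection onto F. If g ∈ C¹(𝕋ⁿ × B) satisfies {g, l_ω} = 0, then ∂_θ g(θ, I) ∈ F^⊥ for every (θ, I); i.e., Π_F(∂_θ g(θ,I)) = 0. -/
open LinearMap (BilinForm)

/-- The dot-product bilinear form over an ordered field. -/
def dotB (R : Type*) [CommRing R] (n : ℕ) : LinearMap.BilinForm R (Fin n → R) :=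
  LinearMap.mk₂ R (fun v w => ∑ i, v i * w i)
    (fun a b c => by simp [add_mul, Finset.sum_add_distrib])
    (fun a b c => by simp [Finset.mul_sum, mul_assoc])
    (fun a b c => by simp [mul_add, Finset.sum_add_distrib])
    (fun a b c => by simp [Finset.mul_sum, mul_left_comm])

lemma dotB_apply {R : Type*} [CommRing R] {n : ℕ} (v w : Fin n → R) :
    dotB R n v w = ∑ i, v i * w i := rfl

lemma dotB_comm {R : Type*} [CommRing R] {n : ℕ} (v w : Fin n → R) :
    dotB R n v w = dotB R n w v := by
  simp [dotB_apply, mul_comm]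

lemma dotB_isRefl {R : Type*} [CommRing R] {n : ℕ} : (dotB R n).IsRefl := by
  intro v w h
  rwa [dotB_comm]

lemma dotB_self_eq_zero {R : Type*} [Field R] [LinearOrder R] [IsStrictOrderedRing R] {n : ℕ} {v : Fin n → R}
    (h : dotB R n v v = 0) : v = 0 := by
  rw [dotB_apply] at h
  funext i
  have h' := (Finset.sum_eq_zero_iff_of_nonneg (fun i _ => mul_self_nonneg (v i))).1 h i
    (Finset.mem_univ i)
  exact mul_self_eq_zero.1 h'

lemma dotB_restrict_nondeg {R : Type*} [Field R] [LinearOrder R] [IsStrictOrderedRing R] {n : ℕ}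
    (W : Submodule R (Fin n → R)) : ((dotB R n).restrict W).Nondegenerate := by
  constructor <;> (intro x hx; have := hx x; rw [LinearMap.BilinForm.restrict_apply] at this; exact Subtype.ext (dotB_self_eq_zero this))

lemma dotB_isCompl {R : Type*} [Field R] [LinearOrder R] [IsStrictOrderedRing R] {n : ℕ}
    (W : Submodule R (Fin n → R)) : IsCompl W ((dotB R n).orthogonal W) :=
  LinearMap.BilinForm.isCompl_orthogonal_of_restrict_nondegenerate
    dotB_isRefl (dotB_restrict_nondeg W)

/-- A closed additive subgroup of `ℝⁿ` containing no line has `0` isolated. -/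
theorem discrete_of_closed_no_line {n : ℕ} (H : AddSubgroup (Fin n → ℝ))
    (hc : IsClosed (H : Set (Fin n → ℝ)))
    (hnl : ∀ v : Fin n → ℝ, (∀ t : ℝ, t • v ∈ H) → v = 0) :
    ∃ ε : ℝ, 0 < ε ∧ ∀ h ∈ H, ‖h‖ < ε → h = 0 := by
  by_contra hcon
  push_neg at hcon
  choose f hfH hfn hf0 using fun m : ℕ =>
    hcon (1 / (m + 1)) (by positivity)
  have hfpos : ∀ m, (0:ℝ) < ‖f m‖ := fun m => norm_pos_iff.2 (hf0 m)
  set u : ℕ → (Fin n → ℝ) := fun m => ‖f m‖⁻¹ • f m with hu_def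
  have hu : ∀ m, u m ∈ Metric.sphere (0 : Fin n → ℝ) 1 := by
    intro m
    simp [u, norm_smul, abs_of_pos (inv_pos.2 (hfpos m)),
      inv_mul_cancel₀ (hfpos m).ne']
  obtain ⟨a, ha, φ, hφ, hlim⟩ :=
    (isCompact_sphere (0 : Fin n → ℝ) 1).tendsto_subseq hu
  have hnorm_lim : Filter.Tendsto (fun m => ‖f (φ m)‖) Filter.atTop (nhds 0) := by
    apply squeeze_zero (fun m => (hfpos _).le) (fun m => ?_)
      tendsto_one_div_add_atTop_nhds_zero_nat
    exact le_trans (hfn (φ m)).le (by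
      apply div_le_div_of_nonneg_left one_pos.le (by positivity)
      have : (m : ℝ) ≤ (φ m : ℝ) := by exact_mod_cast hφ.le_apply
      linarith)
  have key : ∀ t : ℝ, t • a ∈ H := by
    intro t
    have hmem : ∀ m, (⌊t / ‖f (φ m)‖⌋ : ℤ) • f (φ m) ∈ H := fun m =>
      zsmul_mem (hfH (φ m)) _
    have hrw : ∀ m, (⌊t / ‖f (φ m)‖⌋ : ℤ) • f (φ m)
        = ((⌊t / ‖f (φ m)‖⌋ : ℝ) * ‖f (φ m)‖) • u (φ m) := by
      intro m
      rw [hu_def, smul_smul, mul_assoc, mul_inv_cancel₀ (hfpos (φ m)).ne', mul_one,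
        ← Int.cast_smul_eq_zsmul ℝ]
    have hscal : Filter.Tendsto (fun m => (⌊t / ‖f (φ m)‖⌋ : ℝ) * ‖f (φ m)‖)
        Filter.atTop (nhds t) := by
      rw [tendsto_iff_dist_tendsto_zero]
      apply squeeze_zero (fun m => dist_nonneg) (fun m => ?_) hnorm_lim
      have h1 : (⌊t / ‖f (φ m)‖⌋ : ℝ) ≤ t / ‖f (φ m)‖ := Int.floor_le _
      have h2 : t / ‖f (φ m)‖ < ⌊t / ‖f (φ m)‖⌋ + 1 := Int.lt_floor_add_one _
      have hp := hfpos (φ m)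
      have h1' : (⌊t / ‖f (φ m)‖⌋ : ℝ) * ‖f (φ m)‖ ≤ t := (le_div_iff₀ hp).1 h1
      have h2' : t < ((⌊t / ‖f (φ m)‖⌋ : ℝ) + 1) * ‖f (φ m)‖ := (div_lt_iff₀ hp).1 h2
      rw [Real.dist_eq, abs_le]
      constructor <;> nlinarith
    have hT : Filter.Tendsto (fun m => (⌊t / ‖f (φ m)‖⌋ : ℤ) • f (φ m))
        Filter.atTop (nhds (t • a)) := by
      have heq : (fun m => (⌊t / ‖f (φ m)‖⌋ : ℤ) • f (φ m))
          = fun m => ((⌊t / ‖f (φ m)‖⌋ : ℝ) * ‖f (φ m)‖) • u (φ m) := funext hrw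
      rw [heq]
      exact hscal.smul hlim
    exact hc.mem_of_tendsto hT (Filter.Eventually.of_forall hmem)
  have := hnl a key
  rw [this] at ha
  simp at ha
def jmap (n : ℕ) : (Fin n → ℚ) →ₗ[ℚ] (Fin n → ℝ) where
  toFun q := fun i => (q i : ℝ)
  map_add' a b := by funext i; push_cast; simp
  map_smul' c a := by
    funext i
    simp [Rat.smul_def]

lemma jmap_apply {n : ℕ} (q : Fin n → ℚ) (i : Fin n) : jmap n q i = (q i : ℝ) := rfl

lemma dotB_jmap {n : ℕ} (p q : Fin n → ℚ) :
    dotB ℝ n (jmap n p) (jmap n q) = ((dotB ℚ n p q : ℚ) : ℝ) := by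
  simp [dotB_apply, jmap_apply]

/-- An integer vector orthogonal to `ω` is orthogonal to all of `F`. -/
theorem rat_orth {n : ℕ} (ω : Fin n → ℝ) (F : Submodule ℝ (Fin n → ℝ)) (hωF : ω ∈ F)
    (hFrat : F = Submodule.span ℝ
      ((fun k : Fin n → ℤ => fun i => (k i : ℝ)) '' {k | (fun i => (k i : ℝ)) ∈ F}))
    (hmin : ∀ k : Fin n → ℤ, (fun i => (k i : ℝ)) ∈ F →
      (∑ i, (k i : ℝ) * ω i) = 0 → k = 0)
    (y : Fin n → ℤ) (hyω : dotB ℝ n (fun i => (y i : ℝ)) ω = 0) :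
    ∀ u ∈ F, dotB ℝ n (fun i => (y i : ℝ)) u = 0 := by
  classical
  set T : Submodule ℚ (Fin n → ℚ) := (F.restrictScalars ℚ).comap (jmap n) with hT
  -- decompose the rational vector `y` as `a + b`, `a ∈ T`, `b ⊥ T`
  have hsup : T ⊔ (dotB ℚ n).orthogonal T = ⊤ := (dotB_isCompl T).sup_eq_top
  have hyq : (fun i => (y i : ℚ)) ∈ T ⊔ (dotB ℚ n).orthogonal T := by
    rw [hsup]; trivial
  obtain ⟨a, haT, b, hbT, hab⟩ := Submodule.mem_sup.1 hyq
  have hja : jmap n a ∈ F := haT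
  -- `jmap b` is orthogonal to `F`
  have hjb : ∀ u ∈ F, dotB ℝ n (jmap n b) u = 0 := by
    intro u hu
    have hle : F ≤ LinearMap.ker (dotB ℝ n (jmap n b)) := by
      rw [hFrat, Submodule.span_le]
      rintro _ ⟨k, hk, rfl⟩
      have hkT : (fun i => (k i : ℚ)) ∈ T := by
        show jmap n (fun i => (k i : ℚ)) ∈ F.restrictScalars ℚ
        have : jmap n (fun i => (k i : ℚ)) = fun i => (k i : ℝ) := by
          funext i; simp [jmap_apply]
        rw [this]; exact hk
      have h0 : dotB ℚ n b (fun i => (k i : ℚ)) = 0 := by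
        rw [dotB_comm]
        exact hbT _ hkT
      have : (fun i => ((k i : ℝ))) = jmap n (fun i => (k i : ℚ)) := by
        funext i; simp [jmap_apply]
      simp only [SetLike.mem_coe, LinearMap.mem_ker]
      rw [this, dotB_jmap, h0]
      norm_num
    exact hle hu
  -- `jmap a` is an (up to denominators) integer vector of `F` orthogonal to `ω`
  have hcast : (fun i => (y i : ℝ)) = jmap n a + jmap n b := by
    rw [← map_add, hab]
    funext i; simp [jmap_apply]
  have hjaω : dotB ℝ n (jmap n a) ω = 0 := by
    have h1 : dotB ℝ n (jmap n a + jmap n b) ω = 0 := by rw [← hcast]; exact hyω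
    have h2 := hjb ω hωF
    rw [map_add, LinearMap.add_apply] at h1
    linarith
  set N : ℕ := ∏ i, (a i).den with hN
  have hNpos : 0 < N := Finset.prod_pos fun i _ => (a i).pos
  have hNint : ∀ i, ∃ m : ℤ, ((N : ℚ)) * a i = m := by
    intro i
    obtain ⟨c, hc⟩ := Finset.dvd_prod_of_mem (fun i => (a i).den) (Finset.mem_univ i)
    refine ⟨c * (a i).num, ?_⟩
    have hden : ((a i).den : ℚ) * a i = (a i).num := by
      rw [mul_comm]
      exact_mod_cast Rat.mul_den_eq_num (a i)
    calc ((N : ℚ)) * a i = ((a i).den * c : ℕ) * a i := by rw [hN, ← hc]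
    _ = (c : ℚ) * (((a i).den : ℚ) * a i) := by push_cast; ring
    _ = ((c * (a i).num : ℤ) : ℚ) := by rw [hden]; push_cast; ring
  choose m hm using hNint
  have hmcast : (fun i => (m i : ℝ)) = (N : ℝ) • jmap n a := by
    funext i
    simp only [Pi.smul_apply, jmap_apply, smul_eq_mul]
    rw [show ((m i : ℝ)) = (((m i : ℤ) : ℚ) : ℝ) by push_cast; ring, ← hm i]
    push_cast
    ring
  have hmF : (fun i => (m i : ℝ)) ∈ F := by
    rw [hmcast]
    exact F.smul_mem _ hja
  have hmω : (∑ i, (m i : ℝ) * ω i) = 0 := by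
    have : dotB ℝ n (fun i => (m i : ℝ)) ω = 0 := by
      rw [hmcast, map_smul, LinearMap.smul_apply, hjaω, smul_zero]
    simpa [dotB_apply] using this
  have hm0 : m = 0 := hmin m hmF hmω
  have hja0 : jmap n a = 0 := by
    have h0 : (N : ℝ) • jmap n a = 0 := by
      rw [← hmcast, hm0]
      funext i; simp
    have hNne : (N : ℝ) ≠ 0 := by positivity
    exact (smul_eq_zero.1 h0).resolve_left hNne
  intro u hu
  have : (fun i => (y i : ℝ)) = jmap n b := by rw [hcast, hja0, zero_add]
  rw [this]
  exact hjb u hu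
/-- Let `ω ∈ ℝⁿ` with minimal rational subspace `F`.  If a C¹ function
`g` on `𝕋ⁿ × ℝⁿ` (a ℤⁿ-periodic function on `ℝⁿ × ℝⁿ`) satisfies `{g, l_ω} = 0`
(i.e. `Dg(x)(ω, 0) = 0` for all `x`), then `∂_θ g(θ, I) ∈ F^⊥` everywhere, i.e. the
directional derivative of `g` in any angle direction `u ∈ F` vanishes. -/
theorem stmt16 (n : ℕ) (ω : Fin n → ℝ) (hω : ω ≠ 0)
    (F : Submodule ℝ (Fin n → ℝ)) (hωF : ω ∈ F)
    -- `F` is rational: it is spanned by its integer vectors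
    (hFrat : F = Submodule.span ℝ
      ((fun k : Fin n → ℤ => fun i => (k i : ℝ)) '' {k | (fun i => (k i : ℝ)) ∈ F}))
    -- minimality of `F` for `ω`
    (hmin : ∀ k : Fin n → ℤ, (fun i => (k i : ℝ)) ∈ F →
      (∑ i, (k i : ℝ) * ω i) = 0 → k = 0)
    (g : (Fin n → ℝ) × (Fin n → ℝ) → ℝ)
    (hgd : Differentiable ℝ g)
    (hgper : ∀ (k : Fin n → ℤ) (θ I : Fin n → ℝ),
      g (θ + (fun i => (k i : ℝ)), I) = g (θ, I))
    (hbr : ∀ x, fderiv ℝ g x (ω, 0) = 0) :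
    ∀ x, ∀ u ∈ F, fderiv ℝ g x (u, 0) = 0 := by
  classical
  -- `g` is constant along the flow of `(ω, 0)`
  have flowgen : ∀ (x : (Fin n → ℝ) × (Fin n → ℝ)) (t : ℝ),
      g (x + t • ((ω, 0) : (Fin n → ℝ) × (Fin n → ℝ))) = g x := by
    intro x t
    set v : (Fin n → ℝ) × (Fin n → ℝ) := (ω, 0) with hv_def
    have hd : ∀ s : ℝ, HasDerivAt (fun τ : ℝ => g (x + τ • v)) 0 s := by
      intro s
      have h1 : HasDerivAt (fun τ : ℝ => x + τ • v) v s := by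
        simpa using ((hasDerivAt_id s).smul_const v).const_add x
      have h2 := (hgd (x + s • v)).hasFDerivAt.comp_hasDerivAt s h1
      have h3 := hbr (x + s • v)
      rw [h3] at h2
      exact h2
    have hconst := is_const_of_deriv_eq_zero (f := fun τ : ℝ => g (x + τ • v))
      (fun s => (hd s).differentiableAt) (fun s => (hd s).deriv) t 0
    simpa using hconst
  -- the invariance subgroup `S`
  set S : AddSubgroup (Fin n → ℝ) :=
    { carrier := {v | ∀ p : (Fin n → ℝ) × (Fin n → ℝ), g (p.1 + v, p.2) = g p}
      zero_mem' := by intro p; simp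
      add_mem' := by
        intro a b ha hb p
        have h1 := ha (p.1 + b, p.2)
        have h2 := hb p
        simp only at h1 h2 ⊢
        rw [show p.1 + (a + b) = p.1 + b + a by abel, h1]
        exact h2
      neg_mem' := by
        intro a ha p
        have h1 := ha (p.1 + -a, p.2)
        simp only at h1 ⊢
        rw [show p.1 + -a + a = p.1 by abel] at h1
        exact h1.symm } with hS_def
  have hSmem : ∀ v : Fin n → ℝ,
      (v ∈ S ↔ ∀ p : (Fin n → ℝ) × (Fin n → ℝ), g (p.1 + v, p.2) = g p) :=
    fun v => Iff.rfl
  have hSclosed : IsClosed (S : Set (Fin n → ℝ)) := by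
    have : (S : Set (Fin n → ℝ)) = ⋂ p : (Fin n → ℝ) × (Fin n → ℝ),
        {v | g (p.1 + v, p.2) = g p} := by
      ext v
      simp only [SetLike.mem_coe, hSmem, Set.mem_iInter, Set.mem_setOf_eq]
    rw [this]
    refine isClosed_iInter fun p => isClosed_eq ?_ continuous_const
    exact hgd.continuous.comp (((continuous_const.add continuous_id).prodMk
      continuous_const))
  have hSω : ∀ t : ℝ, t • ω ∈ S := by
    intro t
    rw [hSmem]
    intro p
    have h1 := flowgen p t
    have h2 : p + t • ((ω, 0) : (Fin n → ℝ) × (Fin n → ℝ)) = (p.1 + t • ω, p.2) := by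
      apply Prod.ext <;> simp
    rw [h2] at h1
    exact h1
  have hSint : ∀ k : Fin n → ℤ, (fun i => (k i : ℝ)) ∈ S := by
    intro k
    rw [hSmem]
    intro p
    exact hgper k p.1 p.2
  -- the subspace of directions all whose multiples lie in `S`
  set V : Submodule ℝ (Fin n → ℝ) :=
    { carrier := {v | ∀ t : ℝ, t • v ∈ S}
      zero_mem' := by intro t; simpa using S.zero_mem
      add_mem' := by
        intro a b ha hb t
        simpa [smul_add] using S.add_mem (ha t) (hb t)
      smul_mem' := by
        intro c v hv t
        simpa [smul_smul] using hv (t * c) } with hV_def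
  have hVmem : ∀ v : Fin n → ℝ, (v ∈ V ↔ ∀ t : ℝ, t • v ∈ S) := fun v => Iff.rfl
  have hωV : ω ∈ V := by rw [hVmem]; exact hSω
  have hVS : ∀ v ∈ V, v ∈ S := by
    intro v hv
    simpa using ((hVmem v).1 hv) 1
  -- the orthogonal complement of V and the projection onto it
  set K : Submodule ℝ (Fin n → ℝ) := (dotB ℝ n).orthogonal V with hK_def
  have hcompl : IsCompl V K := dotB_isCompl V
  set prjK : (Fin n → ℝ) →ₗ[ℝ] K := Submodule.linearProjOfIsCompl K V hcompl.symm
    with hprjK_def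
  set Pi' : (Fin n → ℝ) →ₗ[ℝ] (Fin n → ℝ) := K.subtype.comp prjK with hPi_def
  have hPiK : ∀ x : Fin n → ℝ, Pi' x ∈ K := fun x => (prjK x).2
  have hPi_of_K : ∀ x : Fin n → ℝ, x ∈ K → Pi' x = x := by
    intro x hx
    have := Submodule.linearProjOfIsCompl_apply_left hcompl.symm ⟨x, hx⟩
    rw [hPi_def]
    simp only [LinearMap.comp_apply, Submodule.coe_subtype]
    rw [hprjK_def]
    exact congrArg _ this
  have hPi_sub_V : ∀ x : Fin n → ℝ, x - Pi' x ∈ V := by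
    intro x
    have h2 : prjK (x - Pi' x) = 0 := by
      rw [map_sub]
      have h3 : prjK (Pi' x) = prjK x := by
        have := Submodule.linearProjOfIsCompl_apply_left hcompl.symm (prjK x)
        rw [hPi_def]
        simp only [LinearMap.comp_apply, Submodule.coe_subtype]
        exact this
      rw [h3, sub_self]
    exact (Submodule.linearProjOfIsCompl_apply_eq_zero_iff hcompl.symm).1 h2
  -- the integer lattice and its projection
  set ebasis := Pi.basisFun ℝ (Fin n) with heb_def
  set Zn : Submodule ℤ (Fin n → ℝ) := Submodule.span ℤ (Set.range ebasis) with hZn_def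
  have hZnint : ∀ k : Fin n → ℤ, (fun i => (k i : ℝ)) ∈ Zn := by
    intro k
    rw [hZn_def, Submodule.mem_span_range_iff_exists_fun]
    refine ⟨k, ?_⟩
    funext j
    simp [heb_def, Pi.single_apply]
  have hZnmem : ∀ v ∈ Zn, ∃ k : Fin n → ℤ, (fun i => (k i : ℝ)) = v := by
    intro v hv
    rw [hZn_def, Submodule.mem_span_range_iff_exists_fun] at hv
    obtain ⟨k, hk⟩ := hv
    refine ⟨k, ?_⟩
    rw [← hk]
    funext j
    simp [heb_def, Pi.single_apply]
  have hZnspan : Submodule.span ℝ (Zn : Set (Fin n → ℝ)) = ⊤ := by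
    rw [eq_top_iff, ← ebasis.span_eq]
    exact Submodule.span_mono (fun x hx => Submodule.subset_span hx)
  set ΛE : Submodule ℤ (Fin n → ℝ) := Zn.map (Pi'.restrictScalars ℤ) with hΛE_def
  have hΛE_S : ∀ z ∈ ΛE, z ∈ S := by
    rintro _ ⟨w, hw, rfl⟩
    obtain ⟨k, hk⟩ := hZnmem w hw
    have hwS : w ∈ S := hk ▸ hSint k
    have hsub : w - Pi' w ∈ S := hVS _ (hPi_sub_V w)
    have : Pi' w = w - (w - Pi' w) := by abel
    rw [LinearMap.coe_restrictScalars]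
    rw [this]
    exact S.sub_mem hwS hsub
  have hΛE_K : ∀ z ∈ ΛE, z ∈ K := by
    rintro _ ⟨w, hw, rfl⟩
    exact hPiK w
  -- discreteness of `ΛE`
  obtain ⟨ε, hεpos, hiso⟩ := discrete_of_closed_no_line (S ⊓ K.toAddSubgroup)
    (hSclosed.inter K.closed_of_finiteDimensional)
    (by
      intro v hv
      have hvV : v ∈ V := by
        rw [hVmem]
        intro t
        exact (AddSubgroup.mem_inf.1 (hv t)).1
      have hvK : v ∈ K := by
        have := (AddSubgroup.mem_inf.1 (hv 1)).2
        rwa [Submodule.mem_toAddSubgroup, one_smul] at this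
      have h0 : dotB ℝ n v v = 0 :=
        (LinearMap.BilinForm.mem_orthogonal_iff.1 hvK) v hvV
      exact dotB_self_eq_zero h0)
  haveI hdisc : DiscreteTopology ΛE := by
    apply DiscreteTopology.of_forall_le_norm hεpos
    intro x hx
    by_contra hlt
    push_neg at hlt
    have hxH : (x : Fin n → ℝ) ∈ S ⊓ K.toAddSubgroup := by
      rw [AddSubgroup.mem_inf, Submodule.mem_toAddSubgroup]
      exact ⟨hΛE_S _ x.2, hΛE_K _ x.2⟩
    have h0 : (x : Fin n → ℝ) = 0 := hiso _ hxH hlt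
    exact hx (Subtype.ext h0)
  -- `W`, the span of the projected lattice, equals `K`
  set W : Submodule ℝ (Fin n → ℝ) := Submodule.span ℝ (ΛE : Set (Fin n → ℝ))
    with hW_def
  have hΛE_W : ∀ z ∈ ΛE, z ∈ W := fun z hz => Submodule.subset_span hz
  have hWK : W = K := by
    apply le_antisymm
    · rw [hW_def, Submodule.span_le]
      exact fun z hz => hΛE_K z hz
    · intro x hx
      have hco : (ΛE : Set (Fin n → ℝ)) = Pi' '' (Zn : Set (Fin n → ℝ)) := rfl
      have h1 : W = Submodule.map Pi' (Submodule.span ℝ (Zn : Set (Fin n → ℝ))) := by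
        rw [Submodule.map_span, hW_def, hco]
      rw [h1, hZnspan, Submodule.map_top]
      exact ⟨x, hPi_of_K x hx⟩
  -- `ΛE` is a full lattice inside `W`
  set L0 : Submodule ℤ W := ΛE.comap ((W.subtype).restrictScalars ℤ) with hL0_def
  haveI : DiscreteTopology L0 := by
    exact DiscreteTopology.preimage_of_continuous_injective (ΛE : Set (Fin n → ℝ))
      (LinearMap.continuous_of_finiteDimensional W.subtype)
      (Submodule.injective_subtype W)
  have hmapL0 : Submodule.map ((W.subtype).restrictScalars ℤ) L0 = ΛE := by
    rw [hL0_def, Submodule.map_comap_eq]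
    apply inf_eq_right.2
    intro z hz
    exact ⟨⟨z, hΛE_W z hz⟩, rfl⟩
  haveI : IsZLattice ℝ L0 := by
    constructor
    apply Submodule.map_injective_of_injective (Submodule.injective_subtype W)
    rw [Submodule.map_span, Submodule.map_top, Submodule.range_subtype]
    have : W.subtype '' (L0 : Set W) = (ΛE : Set (Fin n → ℝ)) := by
      have := congrArg (fun (p : Submodule ℤ (Fin n → ℝ)) => (p : Set (Fin n → ℝ))) hmapL0
      exact this
    rw [this, ← hW_def]
  haveI : Module.Free ℤ L0 := ZLattice.module_free ℝ L0
  haveI : Module.Finite ℤ L0 := ZLattice.module_finite ℝ L0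
  set b := Module.Free.chooseBasis ℤ L0 with hb_def
  set bR := Module.Basis.ofZLatticeBasis ℝ L0 b with hbR_def
  haveI : DecidableEq (Module.Free.ChooseBasisIndex ℤ L0) := Classical.decEq _
  haveI hfdW : FiniteDimensional ℝ W := inferInstance
  set_option synthInstance.maxHeartbeats 1000000 in
  set c := ((dotB ℝ n).restrict W).dualBasis (dotB_restrict_nondeg W) bR with hc_def
  have hdual : ∀ i j, dotB ℝ n ((c i : W) : Fin n → ℝ) ((bR j : W) : Fin n → ℝ)
      = if j = i then 1 else 0 := by
    intro i j
    have h2 := LinearMap.BilinForm.apply_dualBasis_left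
      (dotB_restrict_nondeg W) bR i j
    rw [← hc_def, LinearMap.BilinForm.restrict_apply] at h2
    exact h2
  -- `ΛE` is the `ℤ`-span of the images of `bR`
  have hspanΛ : ΛE = Submodule.span ℤ
      (Set.range fun i => ((bR i : W) : Fin n → ℝ)) := by
    have h1 : Submodule.span ℤ (Set.range bR) = L0 := Module.Basis.ofZLatticeBasis_span ℝ L0 b
    calc ΛE = Submodule.map ((W.subtype).restrictScalars ℤ) L0 := hmapL0.symm
    _ = Submodule.map ((W.subtype).restrictScalars ℤ)
        (Submodule.span ℤ (Set.range bR)) := by rw [h1]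
    _ = Submodule.span ℤ (Set.range fun i => ((bR i : W) : Fin n → ℝ)) := by
        rw [Submodule.map_span]
        congr 1
        ext z
        constructor
        · rintro ⟨_, ⟨i, rfl⟩, rfl⟩; exact ⟨i, rfl⟩
        · rintro ⟨i, rfl⟩; exact ⟨bR i, ⟨i, rfl⟩, rfl⟩
  -- each dual-basis vector is an integer vector orthogonal to `ω`, hence to `F`
  have hcF : ∀ i, ∀ u ∈ F, dotB ℝ n ((c i : W) : Fin n → ℝ) u = 0 := by
    intro i
    set y : Fin n → ℝ := ((c i : W) : Fin n → ℝ) with hy_def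
    have hyW : y ∈ W := (c i).2
    have hyK : y ∈ K := hWK ▸ hyW
    -- `y` pairs integrally with every element of `ΛE`
    have hints : ∀ z ∈ ΛE, ∃ q : ℤ, dotB ℝ n y z = q := by
      have hle : ΛE ≤ (Submodule.span ℤ {(1 : ℝ)}).comap
          ((dotB ℝ n y).restrictScalars ℤ) := by
        rw [hspanΛ, Submodule.span_le]
        rintro _ ⟨j, rfl⟩
        simp only [SetLike.mem_coe, Submodule.mem_comap, LinearMap.coe_restrictScalars]
        rw [hdual i j]
        by_cases hji : j = i
        · rw [if_pos hji]
          exact Submodule.mem_span_singleton.2 ⟨1, by simp⟩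
        · rw [if_neg hji]
          exact Submodule.zero_mem _
      intro z hz
      have := hle hz
      rw [Submodule.mem_comap] at this
      obtain ⟨q, hq⟩ := Submodule.mem_span_singleton.1 this
      exact ⟨q, by simpa using hq.symm⟩
    -- hence `y` has integer coordinates
    have hycoord : ∀ j, ∃ q : ℤ, y j = q := by
      intro j
      have hePi : Pi' (ebasis j) ∈ ΛE := ⟨ebasis j, Submodule.subset_span ⟨j, rfl⟩, rfl⟩
      obtain ⟨q, hq⟩ := hints _ hePi
      refine ⟨q, ?_⟩
      have h1 : dotB ℝ n y (ebasis j) = y j := by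
        simp [dotB_apply, heb_def, Pi.single_apply, mul_ite]
      have h2 : dotB ℝ n y (ebasis j - Pi' (ebasis j)) = 0 := by
        rw [dotB_comm]
        exact (LinearMap.BilinForm.mem_orthogonal_iff.1 hyK) _ (hPi_sub_V (ebasis j))
      have h3 : dotB ℝ n y (ebasis j) = dotB ℝ n y (Pi' (ebasis j)) := by
        have := map_sub (dotB ℝ n y) (ebasis j) (Pi' (ebasis j))
        rw [h2] at this
        linarith [this]
      rw [← h1, h3, hq]
    choose mv hmv using hycoord
    have hyform : y = fun j => (mv j : ℝ) := funext hmv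
    have hyω : dotB ℝ n y ω = 0 := by
      rw [dotB_comm]
      exact (LinearMap.BilinForm.mem_orthogonal_iff.1 hyK) ω hωV
    intro u hu
    have := rat_orth ω F hωF hFrat hmin mv (by rw [← hyform]; exact hyω) u hu
    rwa [← hyform] at this
  -- conclusion: every `u ∈ F` lies in `V`
  intro x u hu
  have huV : u ∈ V := by
    set w : Fin n → ℝ := Pi' u with hw_def
    have hwW : w ∈ W := hWK.symm ▸ hPiK u
    have hwu : dotB ℝ n w u = 0 := by
      have hWle : W ≤ LinearMap.ker ((dotB ℝ n).flip u) := by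
        have hcspan : Submodule.span ℝ
            (Set.range fun i => ((c i : W) : Fin n → ℝ)) = W := by
          have h1 : Submodule.map W.subtype (Submodule.span ℝ (Set.range c))
              = Submodule.map W.subtype ⊤ := by rw [c.span_eq]
          rw [Submodule.map_span, Submodule.map_top, Submodule.range_subtype] at h1
          have hset : (Set.range fun i => ((c i : W) : Fin n → ℝ))
              = W.subtype '' Set.range c := by
            ext z
            constructor
            · rintro ⟨i, rfl⟩; exact ⟨c i, ⟨i, rfl⟩, rfl⟩
            · rintro ⟨_, ⟨i, rfl⟩, rfl⟩; exact ⟨i, rfl⟩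
          rw [hset]
          exact h1
        rw [← hcspan, Submodule.span_le]
        rintro _ ⟨i, rfl⟩
        simp only [SetLike.mem_coe, LinearMap.mem_ker, LinearMap.flip_apply]
        exact hcF i u hu
      have := hWle hwW
      simp only [LinearMap.mem_ker, LinearMap.flip_apply] at this
      exact this
    have hvw : u - w ∈ V := hPi_sub_V u
    have hww : dotB ℝ n w w = 0 := by
      have h1 : dotB ℝ n w (u - w) = 0 := by
        rw [dotB_comm]
        exact (LinearMap.BilinForm.mem_orthogonal_iff.1 (hPiK u)) _ hvw
      have h2 := map_sub (dotB ℝ n w) u w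
      rw [h1] at h2
      rw [hwu] at h2
      linarith [h2]
    have hw0 : w = 0 := dotB_self_eq_zero hww
    have hprj0 : prjK u = 0 := by
      apply Subtype.ext
      rw [Submodule.coe_zero]
      exact hw0
    exact (Submodule.linearProjOfIsCompl_apply_eq_zero_iff hcompl.symm).1 hprj0
  -- derivative along direction `u` vanishes
  have hconst : ∀ t : ℝ, g (x + t • ((u, 0) : (Fin n → ℝ) × (Fin n → ℝ))) = g x := by
    intro t
    have h1 := (hSmem _).1 ((hVmem u).1 huV t) x
    have h2 : x + t • ((u, 0) : (Fin n → ℝ) × (Fin n → ℝ)) = (x.1 + t • u, x.2) := by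
      apply Prod.ext <;> simp
    rw [h2]
    exact h1
  have hd0 : HasDerivAt (fun t : ℝ => g (x + t • ((u, 0) : (Fin n → ℝ) × (Fin n → ℝ))))
      (fderiv ℝ g x (u, 0)) 0 := by
    have h1 : HasDerivAt (fun τ : ℝ => x + τ • ((u, 0) : (Fin n → ℝ) × (Fin n → ℝ)))
        ((u, 0) : (Fin n → ℝ) × (Fin n → ℝ)) 0 := by
      simpa using ((hasDerivAt_id (0 : ℝ)).smul_const
        ((u, 0) : (Fin n → ℝ) × (Fin n → ℝ))).const_add x
    have h2 := (hgd (x + (0 : ℝ) • ((u, 0) : (Fin n → ℝ) × (Fin n → ℝ)))).hasFDerivAt.comp_hasDerivAt 0 h1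
    simp only [zero_smul, add_zero] at h2
    exact h2
  have hd1 : HasDerivAt (fun t : ℝ => g (x + t • ((u, 0) : (Fin n → ℝ) × (Fin n → ℝ)))) 0 0 := by
    have heq : (fun t : ℝ => g (x + t • ((u, 0) : (Fin n → ℝ) × (Fin n → ℝ))))
        = fun _ => g x := funext hconst
    rw [heq]
    exact hasDerivAt_const _ _
  exact hd0.unique hd1
end

section
/- Let N(θ,I) = l_ω(I) + G(θ,I) + f̃(θ,I) be a C¹ Hamiltonian on 𝕋ⁿ × B with {G, l_ω} = 0 and |∂_θ f̃|_{C⁰} ≤ M. Then any solution (θ(t), I(t)) defined on [0, T] with values in 𝕋ⁿ × B satisfies |Π_F(I(t) − I(0))| ≤ |t| M for all t ∈ [0, T], where Π_F is the orthogonal projection onto the minimal rational subspace F of ω and |·| is the supremum norm. -/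
open Submodule Filter Topology

theorem keyLemma {E : Type*} [NormedAddCommGroup E] [InnerProductSpace ℝ E]
    [FiniteDimensional ℝ E] (H : AddSubgroup E) (hcl : IsClosed (H : Set E))
    (hsp : Submodule.span ℝ (H : Set E) = ⊤)
    (x : E) (hxH : x ∈ H) (hxV : ¬ ∀ t : ℝ, t • x ∈ H) :
    ∃ φ : E →ₗ[ℝ] ℝ, (∀ h ∈ H, ∃ z : ℤ, φ h = (z : ℝ)) ∧
      (∀ v, (∀ t : ℝ, t • v ∈ H) → φ v = 0) ∧ φ x ≠ 0 := by
  classical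
  -- the subspace of directions fully contained in H
  set V : Submodule ℝ E :=
    { carrier := {v | ∀ t : ℝ, t • v ∈ H}
      add_mem' := fun {a b} ha hb t => by
        simpa [smul_add] using H.add_mem (ha t) (hb t)
      zero_mem' := fun t => by simpa using H.zero_mem
      smul_mem' := fun c {v} hv t => by
        simpa [smul_smul] using hv (t * c) } with hVdef
  have hVsub : ∀ v ∈ V, v ∈ H := fun v hv => by simpa using (hv 1 : (1:ℝ) • v ∈ H)
  -- discreteness of H ∩ Vᗮ
  have hdisc : ∃ ε > 0, ∀ w : E, w ∈ H → w ∈ Vᗮ → ‖w‖ < ε → w = 0 := by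
    by_contra hc
    push_neg at hc
    have hseq : ∀ j : ℕ, ∃ w : E, w ∈ H ∧ w ∈ Vᗮ ∧ ‖w‖ < 1/(j+1) ∧ w ≠ 0 := by
      intro j
      obtain ⟨w, hw1, hw2, hw3, hw4⟩ := hc (1/(j+1)) (by positivity)
      exact ⟨w, hw1, hw2, hw3, hw4⟩
    choose w hwH hwW hwn hw0 using hseq
    set y : ℕ → E := fun j => ‖w j‖⁻¹ • w j with hy
    have hwpos : ∀ j, 0 < ‖w j‖ := fun j => norm_pos_iff.mpr (hw0 j)
    have hys : ∀ j, y j ∈ Metric.sphere (0 : E) 1 := by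
      intro j
      simp [hy, norm_smul, abs_of_pos (inv_pos.mpr (hwpos j)),
        inv_mul_cancel₀ (ne_of_gt (hwpos j))]
    obtain ⟨u, hus, ψ, hψ, hconv⟩ := (isCompact_sphere (0:E) 1).tendsto_subseq hys
    have hrn : Tendsto (fun j => ‖w (ψ j)‖) atTop (𝓝 0) := by
      apply squeeze_zero (fun j => norm_nonneg _) (fun j => le_of_lt (hwn (ψ j)))
      -- 1/(ψ j + 1) → 0
      apply squeeze_zero (fun j => by positivity)
        (g := fun j : ℕ => 1/(j+1 : ℝ))
      · intro j
        apply div_le_div_of_nonneg_left one_pos.le (by positivity)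
        have hj : (j:ℝ) ≤ ψ j := by exact_mod_cast hψ.le_apply
        linarith
      · exact tendsto_one_div_add_atTop_nhds_zero_nat
    have huW : u ∈ Vᗮ := by
      exact V.isClosed_orthogonal.mem_of_tendsto hconv (Eventually.of_forall fun j => Vᗮ.smul_mem _ (hwW (ψ j)))
    have huV : u ∈ V := by
      intro t
      have hlim : Tendsto (fun j => (⌊t / ‖w (ψ j)‖⌋ : ℤ) • w (ψ j)) atTop (𝓝 (t • u)) := by
        have heq : ∀ j, (⌊t / ‖w (ψ j)‖⌋ : ℤ) • w (ψ j)
            = ((⌊t / ‖w (ψ j)‖⌋ : ℝ) * ‖w (ψ j)‖) • y (ψ j) := by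
          intro j
          rw [hy]
          rw [smul_smul, mul_assoc, mul_inv_cancel₀ (ne_of_gt (hwpos (ψ j))), mul_one,
            Int.cast_smul_eq_zsmul]
        rw [funext heq]
        have hsc : Tendsto (fun j => (⌊t / ‖w (ψ j)‖⌋ : ℝ) * ‖w (ψ j)‖) atTop (𝓝 t) := by
          have hd : Tendsto (fun j => (⌊t / ‖w (ψ j)‖⌋ : ℝ) * ‖w (ψ j)‖ - t) atTop (𝓝 0) := by
            apply squeeze_zero_norm _ hrn
            intro j
            have hr := hwpos (ψ j)
            have h1 : (⌊t / ‖w (ψ j)‖⌋ : ℝ) ≤ t / ‖w (ψ j)‖ := Int.floor_le _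
            have h2 : t / ‖w (ψ j)‖ < ⌊t / ‖w (ψ j)‖⌋ + 1 := Int.lt_floor_add_one _
            rw [Real.norm_eq_abs, abs_le]
            constructor <;> nlinarith [mul_le_mul_of_nonneg_right h1 hr.le,
              mul_lt_mul_of_pos_right h2 hr, div_mul_cancel₀ t (ne_of_gt hr)]
          have := hd.add_const t
          simpa using this
        exact hsc.smul hconv
      have hmem : ∀ j, (⌊t / ‖w (ψ j)‖⌋ : ℤ) • w (ψ j) ∈ H :=
        fun j => H.zsmul_mem (hwH (ψ j)) _
      exact hcl.mem_of_tendsto hlim (Eventually.of_forall hmem)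
    have : u = 0 := by
      have := (Submodule.mem_orthogonal V u).mp huW u huV
      simpa [inner_self_eq_zero] using this
    rw [this] at hus
    simp at hus
  obtain ⟨ε, hε, hsep⟩ := hdisc
  -- the projection onto Vᗮ
  set Q : E →L[ℝ] Vᗮ := orthogonalProjection Vᗮ with hQdef
  have hQdecomp : ∀ z : E, (Q z : E) = z - (orthogonalProjection V z : E) := by
    intro z
    have := Submodule.starProjection_add_starProjection_orthogonal (K := V) z
    rw [hQdef, eq_sub_iff_add_eq, add_comm]
    exact this
  have hQH : ∀ h ∈ H, (Q h : E) ∈ H := by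
    intro h hh
    rw [hQdecomp]
    exact H.sub_mem hh (hVsub _ (orthogonalProjection V h).2)
  have hQV : ∀ v ∈ V, Q v = 0 :=
    fun v hv => Submodule.orthogonalProjectionOnto_apply_of_mem_orthogonal
      (V.le_orthogonal_orthogonal hv)
  have hQW : ∀ w : Vᗮ, Q (w : E) = w :=
    fun w => orthogonalProjection_mem_subspace_eq_self w
  -- the lattice
  set L : Submodule ℤ Vᗮ := { carrier := {w : Vᗮ | (w : E) ∈ H}
                              add_mem' := fun {a b} ha hb => by
                                simpa using H.add_mem ha hb
                              zero_mem' := by simpa using H.zero_mem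
                              smul_mem' := fun c {v} hv => by
                                simpa using H.zsmul_mem hv c } with hLdef
  have hLmem : ∀ w : Vᗮ, w ∈ L ↔ (w : E) ∈ H := fun w => Iff.rfl
  haveI : DiscreteTopology L := by
    apply discreteTopology_of_isOpen_singleton_zero
    have : ({0} : Set L) = (Subtype.val : L → Vᗮ) ⁻¹' (Metric.ball (0 : Vᗮ) ε) := by
      ext w
      simp only [Set.mem_singleton_iff, Set.mem_preimage, Metric.mem_ball, dist_zero_right]
      constructor
      · rintro rfl; simpa using hε
      · intro hw
        have := hsep ((w : Vᗮ) : E) w.2 (w : Vᗮ).2 (by simpa using hw)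
        exact Subtype.ext (Subtype.ext (by simpa using this))
    rw [this]
    exact (Metric.isOpen_ball).preimage continuous_subtype_val
  haveI : IsZLattice ℝ L := by
    constructor
    rw [← top_le_iff]
    intro w _
    have hw : w = Q (w : E) := (hQW w).symm
    have hmem : (w : Vᗮ) ∈ Submodule.map (Q : E →ₗ[ℝ] Vᗮ) ⊤ := by
      rw [hw]; exact ⟨(w : E), trivial, rfl⟩
    rw [← hsp, Submodule.map_span] at hmem
    refine Submodule.span_mono ?_ hmem
    rintro _ ⟨h, hh, rfl⟩
    exact hQH h hh
  haveI : Module.Free ℤ L := ZLattice.module_free ℝ L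
  haveI : Module.Finite ℤ L := ZLattice.module_finite ℝ L
  set b₀ := Module.Free.chooseBasis ℤ L with hb₀
  set bR := Module.Basis.ofZLatticeBasis ℝ L b₀ with hbR
  -- Q x is a nonzero lattice point
  have hQxL : Q x ∈ L := hQH x hxH
  have hQx0 : Q x ≠ 0 := by
    intro h0
    apply hxV
    have hx' : x = (orthogonalProjection V x : E) := by
      have h1 : x - (orthogonalProjection V x : E) = 0 := by
        rw [← hQdecomp x, h0]; simp
      exact sub_eq_zero.mp h1
    intro t
    have : x ∈ V := by rw [hx']; exact (orthogonalProjection V x).2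
    exact this t
  obtain ⟨i₀, hi₀⟩ : ∃ i, bR.repr (Q x) i ≠ 0 := by
    by_contra hc
    push_neg at hc
    apply hQx0
    have : bR.repr (Q x) = 0 := Finsupp.ext fun i => hc i
    have := bR.repr.injective (by simpa using this)
    simpa using this
  refine ⟨(bR.coord i₀).comp (Q : E →ₗ[ℝ] ↥Vᗮ), ?_, ?_, ?_⟩
  · intro h hh
    refine ⟨b₀.repr ⟨Q h, hQH h hh⟩ i₀, ?_⟩
    have := Module.Basis.ofZLatticeBasis_repr_apply ℝ L b₀ ⟨Q h, hQH h hh⟩ i₀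
    simp only [LinearMap.coe_comp, Function.comp_apply, Module.Basis.coord_apply,
      ContinuousLinearMap.coe_coe]
    rw [← this]
  · intro v hv
    have : Q v = 0 := hQV v hv
    simp [this]
  · have := Module.Basis.ofZLatticeBasis_repr_apply ℝ L b₀ ⟨Q x, hQxL⟩ i₀
    simpa using hi₀


open Finset

theorem ratLemma {n : ℕ} (ω : Fin n → ℝ) (F : Submodule ℝ (Fin n → ℝ)) (hωF : ω ∈ F)
    (hFrat : F = Submodule.span ℝ
      ((fun k : Fin n → ℤ => fun i => (k i : ℝ)) '' {k | (fun i => (k i : ℝ)) ∈ F}))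
    (hmin : ∀ k : Fin n → ℤ, (fun i => (k i : ℝ)) ∈ F →
      (∑ i, (k i : ℝ) * ω i) = 0 → k = 0)
    (a : Fin n → ℤ) (haω : ∑ i, (a i : ℝ) * ω i = 0)
    (k : Fin n → ℤ) (hk : (fun i => (k i : ℝ)) ∈ F) :
    ∑ i, (a i : ℝ) * (k i : ℝ) = 0 := by
  classical
  set S : Set (Fin n → ℝ) :=
    (fun k : Fin n → ℤ => fun i => (k i : ℝ)) '' {k | (fun i => (k i : ℝ)) ∈ F} with hS
  have hSF : S ⊆ (F : Set (Fin n → ℝ)) := by rintro _ ⟨m, hm, rfl⟩; exact hm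
  obtain ⟨b, hbS, hbspan, hbind⟩ := exists_linearIndependent ℝ S
  have hbF : Submodule.span ℝ b = F := by rw [hbspan, ← hFrat]
  have hbfin : b.Finite := hbind.set_finite_of_isNoetherian
  haveI : Fintype ↥b := hbfin.fintype
  set vv : ↥b → (Fin n → ℝ) := fun p => (p : Fin n → ℝ) with hvv
  have hrep : ∀ p : ↥b, ∃ m : Fin n → ℤ, (fun i => (m i : ℝ)) = vv p := by
    intro p
    obtain ⟨m, -, hm⟩ := hbS p.2
    exact ⟨m, hm⟩
  choose m hm using hrep
  have hml : ∀ p l, ((m p l : ℤ) : ℝ) = vv p l := fun p l => congrFun (hm p) l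
  have hvvF : ∀ p, vv p ∈ F := fun p => hSF (hbS p.2)
  set Γ : Matrix ↥b ↥b ℚ := fun p q => ((∑ l, m p l * m q l : ℤ) : ℚ) with hΓdef
  have hΓ : ∀ p q, ((Γ p q : ℚ) : ℝ) = ∑ l, vv p l * vv q l := by
    intro p q
    rw [hΓdef]
    push_cast
    exact Finset.sum_congr rfl fun l _ => by rw [hml, hml]
  have hΓsymm : ∀ p q, Γ p q = Γ q p := by
    intro p q
    rw [hΓdef]
    have : (∑ l, m p l * m q l) = ∑ l, m q l * m p l :=
      Finset.sum_congr rfl fun l _ => mul_comm _ _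
    simp only [this]
  have hdot : ∀ (c : ↥b → ℝ) (q : ↥b),
      (∑ l, (∑ p, c p * vv p l) * vv q l) = ∑ p, c p * ((Γ p q : ℚ) : ℝ) := by
    intro c q
    simp_rw [hΓ, Finset.sum_mul, Finset.mul_sum]
    rw [Finset.sum_comm]
    exact Finset.sum_congr rfl fun p _ => Finset.sum_congr rfl fun l _ => by ring
  have hdet : Γ.det ≠ 0 := by
    intro h
    obtain ⟨c, hc0, hcv⟩ := (Matrix.exists_mulVec_eq_zero_iff).mpr h
    set cR : ↥b → ℝ := fun p => (c p : ℝ) with hcR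
    set u : Fin n → ℝ := fun l => ∑ p, cR p * vv p l with hu
    have hu0 : ∀ q, ∑ p, cR p * ((Γ p q : ℚ) : ℝ) = 0 := by
      intro q
      have : Γ.mulVec c q = 0 := by rw [hcv]; rfl
      have h2 : ∑ p, c p * Γ p q = 0 := by
        rw [← this]
        simp only [Matrix.mulVec, dotProduct]
        exact Finset.sum_congr rfl fun p _ => by rw [hΓsymm p q, mul_comm]
      calc ∑ p, cR p * ((Γ p q : ℚ) : ℝ) = ((∑ p, c p * Γ p q : ℚ) : ℝ) := by push_cast; rfl
        _ = 0 := by rw [h2]; simp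
    have husq : ∑ l, u l * u l = 0 := by
      have e1 : ∑ l, u l * u l = ∑ l, ∑ q, cR q * (u l * vv q l) := by
        refine Finset.sum_congr rfl fun l _ => ?_
        have hul : u l = ∑ q, cR q * vv q l := rfl
        nth_rewrite 2 [hul]
        rw [Finset.mul_sum]
        exact Finset.sum_congr rfl fun q _ => by ring
      have e2 : ∑ q, cR q * ∑ l, u l * vv q l = ∑ q, ∑ l, cR q * (u l * vv q l) := by
        refine Finset.sum_congr rfl fun q _ => ?_
        rw [Finset.mul_sum]
      rw [e1, Finset.sum_comm, ← e2]
      have : ∀ q, (∑ l, u l * vv q l) = ∑ p, cR p * ((Γ p q : ℚ) : ℝ) := fun q => hdot cR q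
      simp_rw [this, hu0, mul_zero]
      simp
    have huz : u = 0 := by
      funext l
      have hn : ∀ l ∈ Finset.univ (α := Fin n), 0 ≤ u l * u l := fun l _ => mul_self_nonneg _
      have := (Finset.sum_eq_zero_iff_of_nonneg hn).mp husq l (Finset.mem_univ l)
      exact mul_self_eq_zero.mp this
    have hlin := Fintype.linearIndependent_iff.mp hbind cR
    have : ∀ p, cR p = 0 := by
      apply hlin
      funext l
      have : (∑ p, cR p • vv p) l = u l := by
        rw [hu]
        simp [Finset.sum_apply]
      rw [this]
      exact congrFun huz l
    apply hc0
    funext p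
    simp only [Pi.zero_apply]
    have h4 : ((c p : ℚ) : ℝ) = 0 := this p
    exact_mod_cast h4
  set β : ↥b → ℚ := fun q => ((∑ l, a l * m q l : ℤ) : ℚ) with hβdef
  have hβ : ∀ q, ((β q : ℚ) : ℝ) = ∑ l, (a l : ℝ) * vv q l := by
    intro q
    rw [hβdef]
    push_cast
    exact Finset.sum_congr rfl fun l _ => by rw [hml]
  set c : ↥b → ℚ := Γ⁻¹.mulVec β with hcdef
  have hΓc : Γ.mulVec c = β := by
    rw [hcdef, Matrix.mulVec_mulVec, Matrix.mul_nonsing_inv _ (isUnit_iff_ne_zero.mpr hdet),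
      Matrix.one_mulVec]
  set u : Fin n → ℝ := fun l => ∑ p, (c p : ℝ) * vv p l with hu
  have hdotu : ∀ q, ∑ l, u l * vv q l = ∑ l, (a l : ℝ) * vv q l := by
    intro q
    rw [hu, hdot (fun p => (c p : ℝ)) q, ← hβ q]
    have : ∑ p, c p * Γ p q = β q := by
      rw [← hΓc]
      simp only [Matrix.mulVec, dotProduct]
      exact Finset.sum_congr rfl fun p _ => by rw [hΓsymm p q, mul_comm]
    rw [← this]
    push_cast
    rfl
  have huF : u ∈ F := by
    rw [hu]
    have : (fun l => ∑ p, (c p : ℝ) * vv p l) = ∑ p, ((c p : ℝ)) • vv p := by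
      funext l
      simp [Finset.sum_apply]
    rw [this]
    exact Submodule.sum_mem F fun p _ => Submodule.smul_mem F _ (hvvF p)
  have hdotF : ∀ x ∈ F, ∑ l, u l * x l = ∑ l, (a l : ℝ) * x l := by
    intro x hx
    rw [← hbF] at hx
    have hx' : x ∈ Submodule.span ℝ (Set.range vv) := by
      rwa [hvv, Subtype.range_coe] 
    obtain ⟨d, hd⟩ := (mem_span_range_iff_exists_fun ℝ).mp hx'
    have hxl : ∀ l, x l = ∑ q, d q * vv q l := by
      intro l
      rw [← hd]
      simp [Finset.sum_apply]
    have e3 : ∀ (g : Fin n → ℝ), ∑ l, g l * x l = ∑ q, d q * ∑ l, g l * vv q l := by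
      intro g
      simp_rw [hxl, Finset.mul_sum]
      rw [Finset.sum_comm]
      exact Finset.sum_congr rfl fun q _ => Finset.sum_congr rfl fun l _ => by ring
    rw [e3 u, e3 (fun l => (a l : ℝ))]
    exact Finset.sum_congr rfl fun q _ => by rw [hdotu q]
  -- clear denominators
  set dd : ℕ := ∏ p, (c p).den with hdd
  have hddpos : 0 < dd := Finset.prod_pos fun p _ => (c p).pos
  have hz : ∀ p : ↥b, ∃ z : ℤ, (z : ℚ) = (dd : ℚ) * c p := by
    intro p
    obtain ⟨s, hs⟩ := Finset.dvd_prod_of_mem (fun p => (c p).den) (Finset.mem_univ p)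
    refine ⟨(c p).num * s, ?_⟩
    push_cast [hdd, hs]
    rw [mul_comm ((c p).den : ℚ), mul_assoc, ← mul_comm (c p), Rat.mul_den_eq_num]
    ring
  choose z hzz using hz
  set k' : Fin n → ℤ := fun l => ∑ p, z p * m p l with hk'
  have hk'R : ∀ l, ((k' l : ℤ) : ℝ) = (dd : ℝ) * u l := by
    intro l
    rw [hk', hu]
    push_cast
    rw [Finset.mul_sum]
    refine Finset.sum_congr rfl fun p _ => ?_
    have : ((z p : ℚ) : ℝ) = ((dd : ℚ) : ℝ) * ((c p : ℚ) : ℝ) := by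
      rw [← Rat.cast_mul, hzz p]
    push_cast at this
    rw [hml, this]
    ring
  have hk'F : (fun i => ((k' i : ℤ) : ℝ)) ∈ F := by
    have : (fun i => ((k' i : ℤ) : ℝ)) = (dd : ℝ) • u := by
      funext l
      rw [hk'R l]
      rfl
    rw [this]
    exact Submodule.smul_mem F _ huF
  have hk'ω : ∑ i, ((k' i : ℤ) : ℝ) * ω i = 0 := by
    have := hdotF ω hωF
    calc ∑ i, ((k' i : ℤ) : ℝ) * ω i = (dd : ℝ) * ∑ i, u i * ω i := by
          rw [Finset.mul_sum]
          exact Finset.sum_congr rfl fun i _ => by rw [hk'R i]; ring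
      _ = (dd : ℝ) * ∑ i, (a i : ℝ) * ω i := by rw [this]
      _ = 0 := by rw [haω, mul_zero]
  have hk'0 : k' = 0 := hmin k' hk'F hk'ω
  have huz : u = 0 := by
    funext l
    have : ((k' l : ℤ) : ℝ) = 0 := by rw [hk'0]; simp
    rw [hk'R l] at this
    have hdd0 : (dd : ℝ) ≠ 0 := by positivity
    exact (mul_eq_zero.mp this).resolve_left hdd0
  have := hdotF (fun i => (k i : ℝ)) hk
  rw [huz] at this
  simp only [Pi.zero_apply, zero_mul, Finset.sum_const_zero] at this
  exact this.symm

theorem derivAux {n : ℕ} (G : (Fin n → ℝ) × (Fin n → ℝ) → ℝ) (hGd : Differentiable ℝ G)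
    (v x y : Fin n → ℝ) (s₀ : ℝ) :
    HasDerivAt (fun s : ℝ => G (x + s • v, y)) (fderiv ℝ G (x + s₀ • v, y) (v, 0)) s₀ := by
  have h1 : HasDerivAt (fun s : ℝ => x + s • v) v s₀ := by
    have := ((hasDerivAt_id s₀).smul_const v).const_add x
    simpa using this
  have h2 : HasDerivAt (fun s : ℝ => (x + s • v, y)) (v, (0 : Fin n → ℝ)) s₀ :=
    h1.prodMk (hasDerivAt_const s₀ y)
  exact ((hGd _).hasFDerivAt).comp_hasDerivAt s₀ h2

theorem invLemma {n : ℕ} (ω : Fin n → ℝ)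
    (F : Submodule ℝ (Fin n → ℝ)) (hωF : ω ∈ F)
    (hFrat : F = Submodule.span ℝ
      ((fun k : Fin n → ℤ => fun i => (k i : ℝ)) '' {k | (fun i => (k i : ℝ)) ∈ F}))
    (hmin : ∀ k : Fin n → ℤ, (fun i => (k i : ℝ)) ∈ F →
      (∑ i, (k i : ℝ) * ω i) = 0 → k = 0)
    (G : (Fin n → ℝ) × (Fin n → ℝ) → ℝ)
    (hGd : Differentiable ℝ G)
    (hGper : ∀ (k : Fin n → ℤ) (x y : Fin n → ℝ),
      G (x + (fun i => (k i : ℝ)), y) = G (x, y))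
    (hGbr : ∀ p, fderiv ℝ G p (ω, 0) = 0) :
    ∀ u ∈ F, ∀ (x y : Fin n → ℝ) (s : ℝ), G (x + s • u, y) = G (x, y) := by
  classical
  have hflow : ∀ (x y : Fin n → ℝ) (s : ℝ), G (x + s • ω, y) = G (x, y) := by
    intro x y s
    have hconst : ∀ s₁ s₂ : ℝ, G (x + s₁ • ω, y) = G (x + s₂ • ω, y) := by
      intro s₁ s₂
      apply is_const_of_deriv_eq_zero (f := fun s : ℝ => G (x + s • ω, y))
      · intro s'
        exact (derivAux G hGd ω x y s').differentiableAt
      · intro s'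
        rw [(derivAux G hGd ω x y s').deriv]
        exact hGbr _
    have := hconst s 0
    simpa using this
  set E := EuclideanSpace ℝ (Fin n) with hE
  set eqv : E ≃L[ℝ] (Fin n → ℝ) := EuclideanSpace.equiv (Fin n) ℝ with heqv
  set H : AddSubgroup E :=
    { carrier := {v : E | ∀ x y : Fin n → ℝ, G (x + eqv v, y) = G (x, y)}
      add_mem' := fun {a b} ha hb x y => by
        rw [map_add, ← add_assoc]
        rw [hb (x + eqv a) y, ha x y]
      zero_mem' := fun x y => by rw [map_zero, add_zero]
      neg_mem' := fun {a} ha x y => by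
        have := ha (x + eqv (-a)) y
        rw [map_neg] at this ⊢
        rw [add_assoc, neg_add_cancel, add_zero] at this
        rw [this] } with hH
  have hHmem : ∀ v : E, v ∈ H ↔ ∀ x y : Fin n → ℝ, G (x + eqv v, y) = G (x, y) :=
    fun v => Iff.rfl
  have hcl : IsClosed (H : Set E) := by
    have : (H : Set E) = ⋂ (x : Fin n → ℝ), ⋂ (y : Fin n → ℝ),
        {v : E | G (x + eqv v, y) = G (x, y)} := by
      ext v; simp [hHmem]
    rw [this]
    refine isClosed_iInter fun x => isClosed_iInter fun y => ?_
    apply isClosed_eq _ continuous_const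
    exact hGd.continuous.comp ((continuous_const.add eqv.continuous).prodMk continuous_const)
  -- integer vectors belong to H
  have hIntH : ∀ k : Fin n → ℤ, eqv.symm (fun i => (k i : ℝ)) ∈ H := by
    intro k
    intro x y
    rw [eqv.apply_symm_apply]
    exact hGper k x y
  have hsingleH : ∀ i, eqv.symm (fun j => if i = j then (1:ℝ) else 0) ∈ H := by
    intro i
    have h2 : (fun j => if i = j then (1:ℝ) else 0)
        = fun j => (((fun j' => if j' = i then (1:ℤ) else 0) j : ℤ) : ℝ) := by
      funext j
      by_cases h : j = i
      · simp [h]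
      · simp [h, Ne.symm h]
    rw [h2]
    exact hIntH _
  have hsp : Submodule.span ℝ (H : Set E) = ⊤ := by
    rw [eq_top_iff]
    intro v _
    have hv : v = ∑ i, (eqv v) i • eqv.symm (fun j => if i = j then (1:ℝ) else 0) := by
      have h1 : (eqv v : Fin n → ℝ)
          = ∑ i, (eqv v) i • (fun j => if i = j then (1:ℝ) else 0) := pi_eq_sum_univ (eqv v)
      have h3 := congrArg eqv.symm h1
      rw [eqv.symm_apply_apply, map_sum] at h3
      rw [h3]
      exact Finset.sum_congr rfl fun i _ => by simp
    rw [hv]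
    exact Submodule.sum_mem _ fun i _ =>
      Submodule.smul_mem _ _ (Submodule.subset_span (hsingleH i))
  -- the ω-line is in H
  have hωline : ∀ t : ℝ, t • eqv.symm ω ∈ H := by
    intro t x y
    rw [map_smul, eqv.apply_symm_apply]
    exact hflow x y t
  -- key claim : lines through integer vectors of F are in H
  have hIntLine : ∀ k : Fin n → ℤ, (fun i => (k i : ℝ)) ∈ F →
      ∀ t : ℝ, t • eqv.symm (fun i => (k i : ℝ)) ∈ H := by
    intro k hkF
    by_contra hcon
    obtain ⟨φ, hφH, hφV, hφx⟩ := keyLemma H hcl hsp _ (hIntH k) hcon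
    set ψ : (Fin n → ℝ) →ₗ[ℝ] ℝ := φ.comp (eqv.symm : (Fin n → ℝ) →ₗ[ℝ] E) with hψ
    have hψsum : ∀ w : Fin n → ℝ, ψ w = ∑ i, w i * ψ (fun j => if i = j then 1 else 0) := by
      intro w
      rw [LinearMap.pi_apply_eq_sum_univ ψ w]
      exact Finset.sum_congr rfl fun i _ => rfl
    have hint : ∀ i, ∃ z : ℤ, ψ (fun j => if i = j then 1 else 0) = (z : ℝ) :=
      fun i => hφH _ (hsingleH i)
    choose a ha using hint
    have haω : ∑ i, (a i : ℝ) * ω i = 0 := by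
      have h0 : ψ ω = 0 := hφV _ hωline
      rw [hψsum ω] at h0
      rw [← h0]
      exact Finset.sum_congr rfl fun i _ => by rw [ha i]; ring
    have hak : ∑ i, (a i : ℝ) * (k i : ℝ) ≠ 0 := by
      have : ψ (fun i => (k i : ℝ)) ≠ 0 := hφx
      intro hzero
      apply this
      have h5 : ∑ i, (k i : ℝ) * ψ (fun j => if i = j then 1 else 0)
          = ∑ i, (a i : ℝ) * (k i : ℝ) :=
        Finset.sum_congr rfl fun i _ => by rw [ha i]; ring
      rw [hψsum, h5, hzero]
    exact hak (ratLemma ω F hωF hFrat hmin a haω k hkF)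
  -- conclude for all u ∈ F by linearity
  set V : Submodule ℝ E :=
    { carrier := {v : E | ∀ t : ℝ, t • v ∈ H}
      add_mem' := fun {a b} ha hb t => by
        simpa [smul_add] using H.add_mem (ha t) (hb t)
      zero_mem' := fun t => by simpa using H.zero_mem
      smul_mem' := fun c {v} hv t => by
        simpa [smul_smul] using hv (t * c) } with hV
  intro u huF x y s
  have huV : eqv.symm u ∈ V := by
    have h1 : eqv.symm u ∈ Submodule.map (eqv.symm : (Fin n → ℝ) →ₗ[ℝ] E) F :=
      ⟨u, huF, rfl⟩
    rw [hFrat, Submodule.map_span] at h1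
    refine Submodule.span_le.mpr ?_ h1
    rintro _ ⟨_, ⟨kk, hkk, rfl⟩, rfl⟩
    exact fun t => hIntLine kk hkk t
  have := huV s x y
  rw [map_smul, eqv.apply_symm_apply] at this
  exact this

/-- Let `N(θ, I) = l_ω(I) + G(θ, I) + f̃(θ, I)` be C¹ on `𝕋ⁿ × ℝⁿ` with
`{G, l_ω} = 0` and `|∂_θ f̃|_{C⁰} ≤ M`.  Then along every solution `(θ(t), I(t))`,
`|Π_F(I(t) − I(0))| ≤ |t| M`, where `Π_F` is the orthogonal projection onto the minimal
rational subspace `F` of `ω` (Euclidean-compatible norms). -/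
theorem stmt18 (n : ℕ) (ω : Fin n → ℝ) (hω : ω ≠ 0)
    (F : Submodule ℝ (Fin n → ℝ)) (hωF : ω ∈ F)
    (hFrat : F = Submodule.span ℝ
      ((fun k : Fin n → ℤ => fun i => (k i : ℝ)) '' {k | (fun i => (k i : ℝ)) ∈ F}))
    (hmin : ∀ k : Fin n → ℤ, (fun i => (k i : ℝ)) ∈ F →
      (∑ i, (k i : ℝ) * ω i) = 0 → k = 0)
    (G f : (Fin n → ℝ) × (Fin n → ℝ) → ℝ)
    (hGd : Differentiable ℝ G) (hfd : Differentiable ℝ f)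
    (hGper : ∀ (k : Fin n → ℤ) (θ I : Fin n → ℝ),
      G (θ + (fun i => (k i : ℝ)), I) = G (θ, I))
    (hfper : ∀ (k : Fin n → ℤ) (θ I : Fin n → ℝ),
      f (θ + (fun i => (k i : ℝ)), I) = f (θ, I))
    -- `{G, l_ω} = 0`
    (hGbr : ∀ x, fderiv ℝ G x (ω, 0) = 0)
    (M : ℝ)
    -- `|∂_θ f̃|_{C⁰} ≤ M`
    (hM : ∀ x, Real.sqrt (∑ i, (fderiv ℝ f x (Pi.single i 1, 0)) ^ 2) ≤ M)
    -- `P` is the orthogonal projection onto `F`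
    (P : (Fin n → ℝ) →ₗ[ℝ] (Fin n → ℝ))
    (hPmem : ∀ x, P x ∈ F)
    (hPfix : ∀ u ∈ F, P u = u)
    (hPorth : ∀ x, ∀ u ∈ F, (∑ i, (x i - P x i) * u i) = 0)
    (θ I : ℝ → Fin n → ℝ)
    -- Hamilton's equations for `N = l_ω + G + f̃`
    (hθ : ∀ t i, HasDerivAt (fun s => θ s i)
      (ω i + fderiv ℝ G (θ t, I t) (0, Pi.single i 1)
        + fderiv ℝ f (θ t, I t) (0, Pi.single i 1)) t)
    (hI : ∀ t i, HasDerivAt (fun s => I s i)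
      (-(fderiv ℝ G (θ t, I t) (Pi.single i 1, 0))
        - fderiv ℝ f (θ t, I t) (Pi.single i 1, 0)) t) :
    ∀ t : ℝ, Real.sqrt (∑ i, (P (I t - I 0) i) ^ 2) ≤ |t| * M := by
  intro t
  have hM0 : 0 ≤ M := le_trans (Real.sqrt_nonneg _) (hM (θ 0, I 0))
  have hinv := invLemma ω F hωF hFrat hmin G hGd hGper hGbr
  have hkey : ∀ u ∈ F, ∀ x y : Fin n → ℝ, fderiv ℝ G (x, y) (u, 0) = 0 := by
    intro u hu x y
    have hd := derivAux G hGd u x y 0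
    have hconst : (fun s : ℝ => G (x + s • u, y)) = fun _ => G (x, y) := by
      funext s; exact hinv u hu x y s
    rw [hconst] at hd
    have h0 := hd.unique (hasDerivAt_const 0 _)
    simpa using h0
  set w : Fin n → ℝ := P (I t - I 0) with hw
  have hwF : w ∈ F := hPmem _
  set W : ℝ := Real.sqrt (∑ i, w i ^ 2) with hWdef
  have hW0 : 0 ≤ W := Real.sqrt_nonneg _
  -- decomposition of (w, 0) in terms of basis pairs
  have hdecomp : ((w, (0 : Fin n → ℝ)) : (Fin n → ℝ) × (Fin n → ℝ))
      = ∑ i, w i • (((Pi.single i 1 : Fin n → ℝ), (0 : Fin n → ℝ))) := by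
    have h1 : (∑ i, w i • (((Pi.single i 1 : Fin n → ℝ), (0 : Fin n → ℝ))))
        = (∑ i, w i • (Pi.single i 1 : Fin n → ℝ), ∑ i, w i • (0 : Fin n → ℝ)) := by
      rw [Prod.ext_iff, Prod.fst_sum, Prod.snd_sum]
      constructor <;> rfl
    rw [h1]
    rw [Prod.ext_iff]
    constructor
    · show w = _
      funext j
      simp only [Finset.sum_apply, Pi.smul_apply, Pi.single_apply, smul_eq_mul,
        mul_ite, mul_one, mul_zero]
      rw [Finset.sum_ite_eq]
      simp
    · show (0 : Fin n → ℝ) = _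
      simp
  have hT : ∀ (T : ((Fin n → ℝ) × (Fin n → ℝ)) →L[ℝ] ℝ),
      T (w, 0) = ∑ i, w i * T (Pi.single i 1, 0) := by
    intro T
    rw [hdecomp, map_sum]
    exact Finset.sum_congr rfl fun i _ => by rw [map_smul]; rfl
  -- the function g
  set g : ℝ → ℝ := fun s => ∑ i, I s i * w i with hg
  set g' : ℝ → ℝ := fun s => -(fderiv ℝ f (θ s, I s) (w, 0)) with hg'
  have hgd : ∀ s, HasDerivAt g (g' s) s := by
    intro s
    have h1 : HasDerivAt g
        (∑ i, (-(fderiv ℝ G (θ s, I s) (Pi.single i 1, 0))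
          - fderiv ℝ f (θ s, I s) (Pi.single i 1, 0)) * w i) s := by
      apply HasDerivAt.fun_sum
      intro i _
      exact (hI s i).mul_const (w i)
    have h2 : (∑ i, (-(fderiv ℝ G (θ s, I s) (Pi.single i 1, 0))
          - fderiv ℝ f (θ s, I s) (Pi.single i 1, 0)) * w i) = g' s := by
      have hp : ∑ i, (-(fderiv ℝ G (θ s, I s) (Pi.single i 1, 0))
            - fderiv ℝ f (θ s, I s) (Pi.single i 1, 0)) * w i
          = -(∑ i, w i * fderiv ℝ G (θ s, I s) (Pi.single i 1, 0))
            - ∑ i, w i * fderiv ℝ f (θ s, I s) (Pi.single i 1, 0) := by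
        rw [← Finset.sum_neg_distrib, ← Finset.sum_sub_distrib]
        exact Finset.sum_congr rfl fun i _ => by ring

      show _ = -(fderiv ℝ f (θ s, I s) (w, 0))
      rw [hp, ← hT (fderiv ℝ G (θ s, I s)), ← hT (fderiv ℝ f (θ s, I s)),
        hkey w hwF (θ s) (I s)]
      ring
    rw [← h2]
    exact h1
  have hbound : ∀ s, ‖g' s‖ ≤ M * W := by
    intro s
    show ‖-(fderiv ℝ f (θ s, I s) (w, 0))‖ ≤ M * W
    rw [norm_neg, Real.norm_eq_abs, hT (fderiv ℝ f (θ s, I s))]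
    set D : Fin n → ℝ := fun i => fderiv ℝ f (θ s, I s) (Pi.single i 1, 0) with hD
    have hcs : (∑ i, w i * D i) ^ 2 ≤ (∑ i, D i ^ 2) * (∑ i, w i ^ 2) := by
      have := Finset.sum_mul_sq_le_sq_mul_sq Finset.univ D w
      calc (∑ i, w i * D i) ^ 2 = (∑ i, D i * w i) ^ 2 := by
            congr 1; exact Finset.sum_congr rfl fun i _ => mul_comm _ _
        _ ≤ (∑ i, D i ^ 2) * (∑ i, w i ^ 2) := this
    have habs : |∑ i, w i * D i| ≤ Real.sqrt (∑ i, D i ^ 2) * W := by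
      rw [← Real.sqrt_sq_eq_abs, hWdef, ← Real.sqrt_mul (by positivity)]
      exact Real.sqrt_le_sqrt hcs
    refine le_trans habs ?_
    exact mul_le_mul_of_nonneg_right (hM (θ s, I s)) hW0
  have hmvt : ‖g t - g 0‖ ≤ (M * W) * ‖t - (0:ℝ)‖ := by
    apply convex_univ.norm_image_sub_le_of_norm_hasDerivWithin_le
      (f' := g') (fun s _ => (hgd s).hasDerivWithinAt) (fun s _ => hbound s)
      (Set.mem_univ 0) (Set.mem_univ t)
  have hgt : g t - g 0 = ∑ i, w i ^ 2 := by
    have h3 := hPorth (I t - I 0) w hwF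
    have h5 : ∀ i, ((I t - I 0) i - P (I t - I 0) i) * w i
        = (I t i - I 0 i) * w i - w i * w i := by
      intro i
      have : P (I t - I 0) i = w i := by rw [← hw]
      rw [this]
      show (I t i - I 0 i - w i) * w i = _
      ring
    have h6 : ∑ i, ((I t i - I 0 i) * w i - w i * w i) = 0 := by
      calc ∑ i, ((I t i - I 0 i) * w i - w i * w i)
          = ∑ i, ((I t - I 0) i - P (I t - I 0) i) * w i :=
            Finset.sum_congr rfl fun i _ => (h5 i).symm
        _ = 0 := h3
    have h7 : ∑ i, (I t i - I 0 i) * w i = ∑ i, w i * w i := by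
      have := Finset.sum_sub_distrib
        (f := fun i => (I t i - I 0 i) * w i) (g := fun i => w i * w i) (s := Finset.univ)
      rw [this] at h6
      linarith [h6]
    calc g t - g 0 = (∑ i, I t i * w i) - (∑ i, I 0 i * w i) := rfl
      _ = ∑ i, ((I t i * w i) - (I 0 i * w i)) := (Finset.sum_sub_distrib _ _).symm
      _ = ∑ i, (I t i - I 0 i) * w i := Finset.sum_congr rfl fun i _ => by ring
      _ = ∑ i, w i * w i := h7
      _ = ∑ i, w i ^ 2 := Finset.sum_congr rfl fun i _ => by ring
  -- conclude
  have hfinal : W ^ 2 ≤ (M * W) * |t| := by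
    have h6 : W ^ 2 = ∑ i, w i ^ 2 := Real.sq_sqrt (by positivity)
    rw [h6, ← hgt]
    calc g t - g 0 ≤ ‖g t - g 0‖ := le_abs_self _
      _ ≤ (M * W) * ‖t - (0:ℝ)‖ := hmvt
      _ = (M * W) * |t| := by rw [sub_zero, Real.norm_eq_abs]
  show W ≤ |t| * M
  rcases eq_or_lt_of_le hW0 with h | h
  · rw [← h]; positivity
  · have : W * W ≤ (|t| * M) * W := by nlinarith [hfinal]
    exact le_of_mul_le_mul_right this h
end
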